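/- arXiv:2205.03193 — 4 statements merged into one kernel-verified Lean document; each statement's English description precedes it below -/
import Mathlib

section
/- Let A be a Hermitian d×d complex matrix. Define 𝒫(A) = {Var_ψ(A) : ψ ∈ ℂ^d a unit vector} and ℳ(A) = {Var_ρ(A) : ρ a density matrix on ℂ^d}. Then 𝒫(A) = ℳ(A) = conv(𝒫(A)), and this common set is exactly the closed interval [0, (λ_max(A) − λ_min(A))²/4]. -/
open Matrix
open scoped ComplexOrder

/-- Variance of the observable `A` in the (mixed) state `ρ`:
`Var_ρ(A) = Tr(A²ρ) − (Tr(Aρ))²`. -/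
noncomputable def varMix {d : ℕ} (A ρ : Matrix (Fin d) (Fin d) ℂ) : ℝ :=
  ((A * A * ρ).trace).re - (((A * ρ).trace).re) ^ 2

/-- Variance of the observable `A` in the pure state (unit vector) `ψ`:
`Var_ψ(A) = ⟨ψ, A²ψ⟩ − ⟨ψ, Aψ⟩²`. -/
noncomputable def varPure {d : ℕ} (A : Matrix (Fin d) (Fin d) ℂ)
    (ψ : EuclideanSpace ℂ (Fin d)) : ℝ :=
  ((star (fun i => ψ i) : Fin d → ℂ) ⬝ᵥ (A * A).mulVec (fun i => ψ i)).re
    - (((star (fun i => ψ i) : Fin d → ℂ) ⬝ᵥ A.mulVec (fun i => ψ i)).re) ^ 2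

lemma trace_mul_outer {d : ℕ} (B : Matrix (Fin d) (Fin d) ℂ) (u : Fin d → ℂ) :
    (B * vecMulVec u (star u)).trace = star u ⬝ᵥ B *ᵥ u := by
  simp only [Matrix.trace, Matrix.diag, Matrix.mul_apply, vecMulVec_apply, dotProduct,
    mulVec, Pi.star_apply, Finset.mul_sum]
  exact Finset.sum_congr rfl fun i _ => Finset.sum_congr rfl fun j _ => by ring

lemma dot_superpos {d : ℕ} (A : Matrix (Fin d) (Fin d) ℂ) (μ ν a b : ℝ) (u w : Fin d → ℂ)
    (huw : star u ⬝ᵥ w = 0) (hwu : star w ⬝ᵥ u = 0)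
    (huu : star u ⬝ᵥ u = 1) (hww : star w ⬝ᵥ w = 1)
    (hAu : A *ᵥ u = (μ:ℂ) • u) (hAw : A *ᵥ w = (ν:ℂ) • w) :
    star ((a:ℂ) • u + (b:ℂ) • w) ⬝ᵥ A *ᵥ ((a:ℂ) • u + (b:ℂ) • w)
      = ((a^2*μ + b^2*ν : ℝ) : ℂ) := by
  simp only [mulVec_add, mulVec_smul, hAu, hAw, dotProduct_add, star_add, star_smul,
    add_dotProduct, smul_dotProduct, dotProduct_smul, huw, hwu, huu, hww, smul_eq_mul,
    Complex.star_def, Complex.conj_ofReal]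
  push_cast
  ring

lemma norm_symm_eq_one {d : ℕ} {u : Fin d → ℂ} (hu : star u ⬝ᵥ u = 1) :
    ‖(WithLp.equiv 2 (Fin d → ℂ)).symm u‖ = 1 := by
  set ψ := (WithLp.equiv 2 (Fin d → ℂ)).symm u
  have h : (inner ℂ ψ ψ : ℂ) = 1 := by
    rw [← hu, dotProduct_comm]; rfl
  have h2 : ‖ψ‖ * ‖ψ‖ = 1 := by
    have h3 : RCLike.re (inner ℂ ψ ψ : ℂ) = 1 := by rw [h]; simp
    rwa [inner_self_eq_norm_mul_norm] at h3
  have h4 := norm_nonneg ψ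
  have h5 : (‖ψ‖ - 1) * (‖ψ‖ + 1) = 0 := by nlinarith
  rcases mul_eq_zero.1 h5 with h6 | h6
  · linarith
  · linarith

lemma dot_self_of_norm_one {d : ℕ} {ψ : EuclideanSpace ℂ (Fin d)} (hψ : ‖ψ‖ = 1) :
    star (fun i => ψ i) ⬝ᵥ (fun i => ψ i) = 1 := by
  have h : (inner ℂ ψ ψ : ℂ) = 1 := by
    rw [inner_self_eq_norm_sq_to_K, hψ]; norm_num
  rw [EuclideanSpace.inner_eq_star_dotProduct, dotProduct_comm] at h
  exact h

lemma exists_unit_eigvec {d : ℕ} (A : Matrix (Fin d) (Fin d) ℂ) (x : ℝ)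
    (hx : (x : ℂ) ∈ spectrum ℂ A) :
    ∃ u : Fin d → ℂ, star u ⬝ᵥ u = 1 ∧ A *ᵥ u = (x:ℂ) • u := by
  rw [← Matrix.spectrum_toEuclideanLin] at hx
  have he : Module.End.HasEigenvalue (Matrix.toEuclideanLin A) (x:ℂ) :=
    Module.End.HasEigenvalue.of_mem_spectrum hx
  obtain ⟨v, hv⟩ := he.exists_hasEigenvector
  have hv0 : v ≠ 0 := hv.2
  have hnv : ‖v‖ ≠ 0 := norm_ne_zero_iff.2 hv0
  set ψ : EuclideanSpace ℂ (Fin d) := ((‖v‖⁻¹ : ℝ) : ℂ) • v with hψdef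
  have hψn : ‖ψ‖ = 1 := by
    rw [hψdef, norm_smul]
    simp [norm_inv, inv_mul_cancel₀ hnv]
  refine ⟨fun i => ψ i, dot_self_of_norm_one hψn, ?_⟩
  have happ : Matrix.toEuclideanLin A ψ = (x:ℂ) • ψ := by
    rw [hψdef, LinearMap.map_smul, hv.apply_eq_smul, smul_comm]
  have := congrArg (WithLp.equiv 2 (Fin d → ℂ)) happ
  change A *ᵥ (fun i => ψ i) = (x:ℂ) • (fun i => ψ i) at this
  simpa [Matrix.toLin'_apply] using this

lemma eigenvalue_mem_spectrum {d : ℕ} (A : Matrix (Fin d) (Fin d) ℂ) (hA : A.IsHermitian)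
    (i : Fin d) : ((hA.eigenvalues i : ℝ) : ℂ) ∈ spectrum ℂ A := by
  rw [← Matrix.spectrum_toEuclideanLin]
  apply Module.End.HasEigenvalue.mem_spectrum
  refine Module.End.hasEigenvalue_of_hasEigenvector
    (f := Matrix.toEuclideanLin A) (x := hA.eigenvectorBasis i)
    ⟨Module.End.mem_eigenspace_iff.2 ?_, hA.eigenvectorBasis.orthonormal.ne_zero i⟩
  apply (WithLp.equiv 2 (Fin d → ℂ)).injective
  have h1 := hA.mulVec_eigenvectorBasis i
  show A *ᵥ ⇑(hA.eigenvectorBasis i) = _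
  rw [h1]
  funext j
  simp [Complex.real_smul]

lemma eig_orth {d : ℕ} {A : Matrix (Fin d) (Fin d) ℂ} (hA : A.IsHermitian) {μ ν : ℝ}
    (hne : μ ≠ ν) {u w : Fin d → ℂ}
    (hAu : A *ᵥ u = (μ:ℂ) • u) (hAw : A *ᵥ w = (ν:ℂ) • w) :
    star u ⬝ᵥ w = 0 := by
  have h1 : star u ⬝ᵥ (A *ᵥ w) = (ν:ℂ) * (star u ⬝ᵥ w) := by
    rw [hAw, dotProduct_smul, smul_eq_mul]
  have hvm : star u ᵥ* A = (μ:ℂ) • star u := by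
    have h3 : star u ᵥ* Aᴴ = star (A *ᵥ u) := (Matrix.star_mulVec A u).symm
    rw [hA.eq] at h3
    rw [h3, hAu, star_smul]
    simp [Complex.star_def, Complex.conj_ofReal]
  have h2 : star u ⬝ᵥ (A *ᵥ w) = (μ:ℂ) * (star u ⬝ᵥ w) := by
    rw [Matrix.dotProduct_mulVec, hvm, smul_dotProduct, smul_eq_mul]
  have h4 : ((μ:ℂ) - (ν:ℂ)) * (star u ⬝ᵥ w) = 0 := by
    rw [sub_mul, ← h1, ← h2, sub_self]
  rcases mul_eq_zero.1 h4 with h5 | h5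
  · exfalso
    apply hne
    have : (μ:ℂ) = (ν:ℂ) := by linear_combination h5
    exact_mod_cast this
  · exact h5

lemma varMix_mem_Icc {d : ℕ} (A : Matrix (Fin d) (Fin d) ℂ) (hA : A.IsHermitian)
    (lmin lmax : ℝ)
    (hbd : ∀ i, lmin ≤ hA.eigenvalues i ∧ hA.eigenvalues i ≤ lmax)
    (ρ : Matrix (Fin d) (Fin d) ℂ) (hρ : ρ.PosSemidef) (htr : ρ.trace = 1) :
    varMix A ρ ∈ Set.Icc 0 ((lmax - lmin) ^ 2 / 4) := by
  classical
  set U : Matrix (Fin d) (Fin d) ℂ := (hA.eigenvectorUnitary : Matrix (Fin d) (Fin d) ℂ) with hU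
  have hU1 : U * star U = 1 := Matrix.mem_unitaryGroup_iff.mp (hA.eigenvectorUnitary).2
  have hU2 : star U * U = 1 := Matrix.mem_unitaryGroup_iff'.mp (hA.eigenvectorUnitary).2
  set lam : Fin d → ℝ := hA.eigenvalues with hlam
  set D : Matrix (Fin d) (Fin d) ℂ := diagonal (fun i => (lam i : ℂ)) with hD
  have spectral : A = U * D * star U := by
    have h := hA.spectral_theorem
    rw [Unitary.conjStarAlgAut_apply] at h
    exact h
  set σ : Matrix (Fin d) (Fin d) ℂ := star U * ρ * U with hσdef
  have hσ : σ.PosSemidef := by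
    have := hρ.conjTranspose_mul_mul_same U
    rwa [← Matrix.star_eq_conjTranspose] at this
  set p : Fin d → ℝ := fun i => (σ i i).re with hpdef
  have hp : ∀ i, 0 ≤ p i := by
    intro i
    have h1 := hσ.re_dotProduct_nonneg (Pi.single i 1)
    have h2 : star (Pi.single i 1 : Fin d → ℂ) ⬝ᵥ σ *ᵥ (Pi.single i 1) = σ i i := by
      simp [dotProduct, mulVec, Pi.single_apply, Finset.mul_sum]
    rwa [h2] at h1
  have hσtr : σ.trace = 1 := by
    rw [hσdef, Matrix.trace_mul_cycle, hU1, Matrix.one_mul, htr]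
  have hsum : ∑ i, p i = 1 := by
    have := congrArg Complex.re hσtr
    simpa [Matrix.trace, Matrix.diag, Complex.re_sum] using this
  have htraceD : ∀ E : Matrix (Fin d) (Fin d) ℂ, ∀ c : Fin d → ℂ,
      (diagonal c * E).trace = ∑ i, c i * E i i := by
    intro E c
    simp [Matrix.trace, Matrix.diag, Matrix.mul_apply, Matrix.diagonal_apply, ite_mul]
  have hcycle : ∀ E : Matrix (Fin d) (Fin d) ℂ,
      (U * E * star U * ρ).trace = (E * σ).trace := by
    intro E
    have ha : U * E * star U * ρ = U * (E * star U * ρ) := by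
      simp only [Matrix.mul_assoc]
    have hb : E * star U * ρ * U = E * σ := by
      rw [hσdef]; simp only [Matrix.mul_assoc]
    rw [ha, Matrix.trace_mul_comm, hb]
  have htrA : ((A * ρ).trace).re = ∑ i, lam i * p i := by
    have h1 : (A * ρ).trace = ∑ i, (lam i : ℂ) * σ i i := by
      rw [spectral, hcycle, hD, htraceD]
    rw [h1, Complex.re_sum]
    exact Finset.sum_congr rfl fun i _ => Complex.re_ofReal_mul _ _
  have hAA : A * A = U * (D * D) * star U := by
    rw [spectral]
    rw [Matrix.mul_assoc (U * D) (star U) (U * D * star U), ← Matrix.mul_assoc (star U) (U * D) (star U),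
      ← Matrix.mul_assoc (star U) U D, hU2, Matrix.one_mul]
    rw [← Matrix.mul_assoc, ← Matrix.mul_assoc, Matrix.mul_assoc U D D]
  have htrA2 : ((A * A * ρ).trace).re = ∑ i, lam i ^ 2 * p i := by
    have h1 : (A * A * ρ).trace = ∑ i, ((lam i : ℂ))^2 * σ i i := by
      rw [hAA, hcycle, hD, diagonal_mul_diagonal, htraceD]
      exact Finset.sum_congr rfl fun i _ => by ring
    have h2 : (A * A * ρ).trace = ∑ i, ((lam i ^ 2 : ℝ) : ℂ) * σ i i := by
      rw [h1]; exact Finset.sum_congr rfl fun i _ => by push_cast; ring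
    rw [h2, Complex.re_sum]
    exact Finset.sum_congr rfl fun i _ => Complex.re_ofReal_mul _ _
  set s1 : ℝ := ∑ i, lam i * p i with hs1
  set s2 : ℝ := ∑ i, lam i ^ 2 * p i with hs2
  have hvar : varMix A ρ = s2 - s1 ^ 2 := by rw [varMix, htrA, htrA2]
  have hlow : s1 ^ 2 ≤ s2 := by
    have := Finset.sum_sq_le_sum_mul_sum_of_sq_eq_mul Finset.univ
      (r := fun i => lam i * p i) (f := fun i => p i) (g := fun i => lam i ^ 2 * p i)
      (fun i _ => hp i) (fun i _ => mul_nonneg (sq_nonneg _) (hp i))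
      (fun i _ => by ring)
    rw [hsum, one_mul] at this
    exact this
  set m : ℝ := (lmin + lmax) / 2 with hm
  have hpop : s2 - 2 * m * s1 + m ^ 2 ≤ (lmax - lmin) ^ 2 / 4 := by
    have hexp : ∑ i, p i * (lam i - m) ^ 2
        = s2 - 2 * m * s1 + m ^ 2 * (∑ i, p i) := by
      rw [hs1, hs2, Finset.mul_sum, Finset.mul_sum, ← Finset.sum_sub_distrib,
        ← Finset.sum_add_distrib]
      exact Finset.sum_congr rfl fun i _ => by ring
    have hle : ∑ i, p i * (lam i - m) ^ 2 ≤ ∑ i, p i * ((lmax - lmin) ^ 2 / 4) := by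
      refine Finset.sum_le_sum fun i _ => ?_
      refine mul_le_mul_of_nonneg_left ?_ (hp i)
      have h1 := (hbd i).1
      have h2 := (hbd i).2
      nlinarith
    rw [hexp, hsum, ← Finset.sum_mul, hsum, one_mul, mul_one] at hle
    linarith
  constructor
  · rw [hvar]; linarith
  · rw [hvar]; nlinarith [sq_nonneg (s1 - m)]

/-- For a Hermitian `d×d` matrix `A`, the set `𝒫(A)` of pure-state variances,
the set `ℳ(A)` of mixed-state variances, and the convex hull of `𝒫(A)` all coincide, and
equal the closed interval `[0, (λ_max(A) − λ_min(A))²/4]`. -/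
theorem stmt_2 (d : ℕ) (hd : 0 < d) (A : Matrix (Fin d) (Fin d) ℂ) (hA : A.IsHermitian)
    (lmin lmax : ℝ)
    (hmin : IsLeast {x : ℝ | (x : ℂ) ∈ spectrum ℂ A} lmin)
    (hmax : IsGreatest {x : ℝ | (x : ℂ) ∈ spectrum ℂ A} lmax) :
    {v : ℝ | ∃ ψ : EuclideanSpace ℂ (Fin d), ‖ψ‖ = 1 ∧ v = varPure A ψ}
        = {v : ℝ | ∃ ρ : Matrix (Fin d) (Fin d) ℂ,
            ρ.PosSemidef ∧ ρ.trace = 1 ∧ v = varMix A ρ} ∧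
    {v : ℝ | ∃ ψ : EuclideanSpace ℂ (Fin d), ‖ψ‖ = 1 ∧ v = varPure A ψ}
        = convexHull ℝ {v : ℝ | ∃ ψ : EuclideanSpace ℂ (Fin d), ‖ψ‖ = 1 ∧ v = varPure A ψ} ∧
    {v : ℝ | ∃ ψ : EuclideanSpace ℂ (Fin d), ‖ψ‖ = 1 ∧ v = varPure A ψ}
        = Set.Icc 0 ((lmax - lmin) ^ 2 / 4) := by
  classical
  have hbd : ∀ i, lmin ≤ hA.eigenvalues i ∧ hA.eigenvalues i ≤ lmax := fun i =>
    ⟨hmin.2 (eigenvalue_mem_spectrum A hA i), hmax.2 (eigenvalue_mem_spectrum A hA i)⟩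
  set SP := {v : ℝ | ∃ ψ : EuclideanSpace ℂ (Fin d), ‖ψ‖ = 1 ∧ v = varPure A ψ} with hSP
  set SM := {v : ℝ | ∃ ρ : Matrix (Fin d) (Fin d) ℂ,
      ρ.PosSemidef ∧ ρ.trace = 1 ∧ v = varMix A ρ} with hSM
  -- pure states are mixed states
  have hPM : SP ⊆ SM := by
    rintro v ⟨ψ, hψ, rfl⟩
    set u : Fin d → ℂ := fun i => ψ i with hu
    refine ⟨vecMulVec u (star u), ?_, ?_, ?_⟩
    · rw [vecMulVec_eq Unit, ← conjTranspose_replicateCol]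
      exact Matrix.posSemidef_self_mul_conjTranspose _
    · have h1 : (vecMulVec u (star u)).trace = star u ⬝ᵥ u := by
        simp only [Matrix.trace, Matrix.diag, vecMulVec_apply, dotProduct, Pi.star_apply]
        exact Finset.sum_congr rfl fun i _ => by ring
      rw [h1, dot_self_of_norm_one hψ]
    · rw [varMix, varPure, trace_mul_outer, trace_mul_outer]
  -- mixed-state variances lie in the interval
  have hMI : SM ⊆ Set.Icc 0 ((lmax - lmin) ^ 2 / 4) := by
    rintro v ⟨ρ, hρ, htr, rfl⟩
    exact varMix_mem_Icc A hA lmin lmax hbd ρ hρ htr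
  -- the interval is contained in the pure-state variances
  have hIP : Set.Icc (0:ℝ) ((lmax - lmin) ^ 2 / 4) ⊆ SP := by
    intro v hv
    have hminmax : lmin ≤ lmax := hmax.2 hmin.1
    rcases eq_or_lt_of_le hminmax with heq | hlt
    · -- degenerate case: interval is {0}
      have hM0 : (lmax - lmin) ^ 2 / 4 = 0 := by rw [← heq]; ring
      have hv0 : v = 0 := le_antisymm (by rw [← hM0]; exact hv.2) hv.1
      obtain ⟨u, huu, hAu⟩ := exists_unit_eigvec A lmin hmin.1
      refine ⟨(WithLp.equiv 2 (Fin d → ℂ)).symm u, norm_symm_eq_one huu, ?_⟩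
      have hA2u : (A * A) *ᵥ u = ((lmin ^ 2 : ℝ) : ℂ) • u := by
        rw [← Matrix.mulVec_mulVec, hAu, Matrix.mulVec_smul, hAu, smul_smul]
        congr 1
        push_cast
        ring
      have e : (fun i => ((WithLp.equiv 2 (Fin d → ℂ)).symm u) i) = u := rfl
      rw [varPure, e, hAu, hA2u, dotProduct_smul, dotProduct_smul, huu, smul_eq_mul,
        smul_eq_mul, mul_one, mul_one, hv0, Complex.ofReal_re, Complex.ofReal_re]
      ring
    · -- nondegenerate case
      obtain ⟨u, huu, hAu⟩ := exists_unit_eigvec A lmin hmin.1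
      obtain ⟨w, hww, hAw⟩ := exists_unit_eigvec A lmax hmax.1
      have hne : lmin ≠ lmax := ne_of_lt hlt
      have huw : star u ⬝ᵥ w = 0 := eig_orth hA hne hAu hAw
      have hwu : star w ⬝ᵥ u = 0 := eig_orth hA (Ne.symm hne) hAw hAu
      set f : ℝ → ℝ := fun t => t * (1 - t) * (lmax - lmin) ^ 2 with hf
      have hfc : ContinuousOn f (Set.Icc 0 (1/2)) := by
        apply Continuous.continuousOn
        continuity
      have hf0 : f 0 = 0 := by
        show (0:ℝ) * (1 - 0) * (lmax - lmin) ^ 2 = 0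
        ring
      have hf12 : f (1/2) = (lmax - lmin) ^ 2 / 4 := by
        show (1:ℝ)/2 * (1 - 1/2) * (lmax - lmin) ^ 2 = _
        ring
      have hmem : v ∈ Set.Icc (f 0) (f (1/2)) := by
        rw [hf0, hf12]; exact hv
      obtain ⟨t, ht, hft⟩ := intermediate_value_Icc (by norm_num : (0:ℝ) ≤ 1/2) hfc hmem
      have ht1 : 0 ≤ t := ht.1
      have ht2 : t ≤ 1/2 := ht.2
      set a : ℝ := Real.sqrt (1 - t) with hadef
      set b : ℝ := Real.sqrt t with hbdef
      have ha2 : a ^ 2 = 1 - t := Real.sq_sqrt (by linarith)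
      have hb2 : b ^ 2 = t := Real.sq_sqrt ht1
      set ψf : Fin d → ℂ := (a:ℂ) • u + (b:ℂ) • w with hψf
      have hnorm : star ψf ⬝ᵥ ψf = 1 := by
        have h1 := dot_superpos (1 : Matrix (Fin d) (Fin d) ℂ) 1 1 a b u w huw hwu huu hww
          (by simp) (by simp)
        rw [Matrix.one_mulVec] at h1
        rw [hψf, h1, show a^2*1+b^2*1 = (1:ℝ) by rw [mul_one, mul_one, ha2, hb2]; ring]
        exact Complex.ofReal_one
      refine ⟨(WithLp.equiv 2 (Fin d → ℂ)).symm ψf, norm_symm_eq_one hnorm, ?_⟩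
      have e : (fun i => ((WithLp.equiv 2 (Fin d → ℂ)).symm ψf) i) = ψf := rfl
      have hA2u : (A * A) *ᵥ u = ((lmin ^ 2 : ℝ) : ℂ) • u := by
        rw [← Matrix.mulVec_mulVec, hAu, Matrix.mulVec_smul, hAu, smul_smul]
        congr 1; push_cast; ring
      have hA2w : (A * A) *ᵥ w = ((lmax ^ 2 : ℝ) : ℂ) • w := by
        rw [← Matrix.mulVec_mulVec, hAw, Matrix.mulVec_smul, hAw, smul_smul]
        congr 1; push_cast; ring
      have d1 := dot_superpos A lmin lmax a b u w huw hwu huu hww hAu hAw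
      have d2 := dot_superpos (A * A) (lmin^2) (lmax^2) a b u w huw hwu huu hww hA2u hA2w
      rw [← hψf] at d1 d2
      rw [varPure, e, d1, d2, Complex.ofReal_re, Complex.ofReal_re, ← hft]
      show t * (1 - t) * (lmax - lmin) ^ 2 = _
      rw [ha2, hb2]
      ring
  have hPI : SP = Set.Icc 0 ((lmax - lmin) ^ 2 / 4) :=
    Set.Subset.antisymm (hPM.trans hMI) hIP
  refine ⟨Set.Subset.antisymm hPM (hMI.trans hIP), ?_, hPI⟩
  rw [hPI, (convex_Icc (0:ℝ) ((lmax - lmin) ^ 2 / 4)).convexHull_eq]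
end

section
/- Let d ≥ 2, let λ₁, …, λ_d be pairwise distinct real numbers, and let s be a nonzero real number. Then ∫_{T_{d−1}} exp(−s(λ_d + Σ_{i=1}^{d−1}(λ_i − λ_d)x_i)) dx = Σ_{i=1}^d exp(−λ_i s) / ((−s)^{d−1} ∏_{j ≠ i}(λ_i − λ_j)), where T_{d−1} = {x ∈ ℝ^{d−1} : x_i ≥ 0 for all i, Σ_{i=1}^{d−1} x_i ≤ 1} and the integral is with respect to (d−1)-dimensional Lebesgue measure. (Equivalently: the Laplace transform of the uniform distribution of Σ_i λ_i r_i over the probability simplex equals this sum of exponentials.) -/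
open MeasureTheory

namespace Stmt5

open Finset

def Tset (m : ℕ) : Set (Fin m → ℝ) := {x | (∀ i, 0 ≤ x i) ∧ (∑ i, x i) ≤ 1}

noncomputable def E (s : ℝ) {m : ℕ} (lam : Fin (m+1) → ℝ) (x : Fin m → ℝ) : ℝ :=
  Real.exp (-s * (lam (Fin.last m) + ∑ i : Fin m, (lam i.castSucc - lam (Fin.last m)) * x i))

noncomputable def Iint (s : ℝ) {m : ℕ} (lam : Fin (m+1) → ℝ) : ℝ := ∫ x in Tset m, E s lam x

noncomputable def D (s : ℝ) {m : ℕ} (lam : Fin (m+1) → ℝ) : ℝ :=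
  ∑ i, Real.exp (-(lam i) * s) / ((-s)^m * ∏ j ∈ Finset.univ.erase i, (lam i - lam j))

lemma isClosed_T (m : ℕ) : IsClosed (Tset m) := by
  have : Tset m = (⋂ i, {x : Fin m → ℝ | 0 ≤ x i}) ∩ {x | (∑ i, x i) ≤ 1} := by
    ext x; simp [Tset, Set.mem_iInter]
  rw [this]
  exact (isClosed_iInter fun i => isClosed_le continuous_const (continuous_apply i)).inter
    (isClosed_le (continuous_finset_sum _ fun i _ => continuous_apply i) continuous_const)

lemma isCompact_T (m : ℕ) : IsCompact (Tset m) := by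
  refine IsCompact.of_isClosed_subset
    (isCompact_univ_pi fun _ : Fin m => isCompact_Icc (a := (0:ℝ)) (b := 1)) (isClosed_T m) ?_
  intro x hx i _
  exact ⟨hx.1 i, le_trans (Finset.single_le_sum (fun j _ => hx.1 j) (mem_univ i)) hx.2⟩

lemma continuous_E (s : ℝ) {m : ℕ} (lam : Fin (m+1) → ℝ) : Continuous (E s lam) := by
  unfold E; fun_prop

lemma integrableOn_E (s : ℝ) {m : ℕ} (lam : Fin (m+1) → ℝ) :
    IntegrableOn (E s lam) (Tset m) :=
  (continuous_E s lam).continuousOn.integrableOn_compact (isCompact_T m)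

lemma erase_eq_insert_map {m : ℕ} (p : Fin (m+1)) (i' : Fin m) :
    (univ : Finset (Fin (m+1))).erase (p.succAbove i')
      = insert p ((univ.erase i').map p.succAboveEmb) := by
  ext j
  simp only [Finset.mem_erase, Finset.mem_insert, Finset.mem_map, Finset.mem_univ, and_true,
    Fin.succAboveEmb_apply]
  constructor
  · intro hj
    rcases eq_or_ne j p with rfl | hjp
    · exact Or.inl rfl
    · obtain ⟨z, hz⟩ := Fin.exists_succAbove_eq hjp
      exact Or.inr ⟨z, fun hzi => hj (by rw [← hz, hzi]), hz⟩
  · rintro (rfl | ⟨z, hz, rfl⟩)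
    · exact (Fin.ne_succAbove _ i')
    · exact fun h => hz (Fin.succAbove_right_injective h)

lemma prod_erase_succAbove {m : ℕ} (p : Fin (m+1)) (g : Fin (m+1) → ℝ) (i' : Fin m) :
    ∏ j ∈ univ.erase (p.succAbove i'), g j
      = g p * ∏ j' ∈ univ.erase i', g (p.succAbove j') := by
  rw [erase_eq_insert_map, Finset.prod_insert, Finset.prod_map]
  · rfl
  · simp only [Finset.mem_map, Fin.succAboveEmb_apply]
    rintro ⟨z, _, hz⟩
    exact Fin.succAbove_ne p z hz

lemma P_ne_zero {m : ℕ} (f : Fin m → ℝ) (hf : Function.Injective f) (i : Fin m) :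
    ∏ j ∈ univ.erase i, (f i - f j) ≠ 0 := by
  rw [Finset.prod_ne_zero_iff]
  intro j hj
  exact sub_ne_zero.mpr fun h => (Finset.mem_erase.mp hj).1 (hf h).symm

lemma key1 (e t u v PA PB : ℝ) (k : ℕ) (ht : t ≠ 0) (hu : u ≠ 0) (hv : v ≠ 0)
    (hPA : PA ≠ 0) (hPB : PB ≠ 0) (huv : u - v ≠ 0) (hrel : u * PA = v * PB) :
    e / (t^(k+1) * (u * PA)) = (e / (t^k * PA) - e / (t^k * PB)) / (t * (u - v)) := by
  field_simp
  linear_combination (e * t^(k+1)) * hrel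

lemma key2 (e t u PA : ℝ) (k : ℕ) :
    e / (t^(k+1) * (u * PA)) = (e / (t^k * PA)) / (t * u) := by
  rw [div_div, pow_succ]; ring_nf

lemma key3 (e t w PB : ℝ) (k : ℕ) (ht : t ≠ 0) (hw : w ≠ 0) (hPB : PB ≠ 0) :
    e / (t^(k+1) * (w * PB)) = (0 - e / (t^k * PB)) / (t * (-w)) := by
  field_simp
  ring

lemma D_rec (k : ℕ) (s : ℝ) (hs : s ≠ 0) (lam : Fin (k+2) → ℝ)
    (hlam : Function.Injective lam) :
    D s lam = (D s (fun j : Fin (k+1) => lam j.castSucc)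
        - D s (fun j : Fin (k+1) => lam (((Fin.last k).castSucc).succAbove j)))
        / (-s * (lam ((Fin.last k).castSucc) - lam (Fin.last (k+1)))) := by
  have ht : (-s : ℝ) ≠ 0 := neg_ne_zero.mpr hs
  have hne : ∀ a b : Fin (k+2), a ≠ b → lam a - lam b ≠ 0 :=
    fun a b hab => sub_ne_zero.mpr fun h => hab (hlam h)
  have hAinj : Function.Injective (fun j : Fin (k+1) => lam j.castSucc) :=
    fun a b h => Fin.castSucc_injective _ (hlam h)
  have hBinj : Function.Injective (fun j : Fin (k+1) => lam (((Fin.last k).castSucc).succAbove j)) :=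
    fun a b h => Fin.succAbove_right_injective (hlam h)
  have hpq : ((Fin.last k).castSucc : Fin (k+2)) ≠ Fin.last (k+1) :=
    (Fin.castSucc_lt_last _).ne
  have hsa2 : ∀ j : Fin k, ((Fin.last k).castSucc).succAbove j.castSucc = j.castSucc.castSucc :=
    fun j => Fin.succAbove_of_castSucc_lt _ _ (Fin.castSucc_lt_castSucc_iff.mpr (Fin.castSucc_lt_last j))
  have hsa3 : ((Fin.last k).castSucc).succAbove (Fin.last k) = Fin.last (k+1) := by
    rw [Fin.succAbove_of_le_castSucc _ _ le_rfl, Fin.succ_last]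
  have e1 : ∀ j : Fin k,
      (∏ jj ∈ univ.erase (j.castSucc.castSucc), (lam j.castSucc.castSucc - lam jj))
        = (lam j.castSucc.castSucc - lam (Fin.last (k+1)))
          * ∏ j' ∈ univ.erase j.castSucc, (lam j.castSucc.castSucc - lam j'.castSucc) := by
    intro j
    have h := prod_erase_succAbove (Fin.last (k+1))
      (fun jj => lam j.castSucc.castSucc - lam jj) j.castSucc
    simpa [Fin.succAbove_last] using h
  have e2 : ∀ j : Fin k,
      (∏ jj ∈ univ.erase (j.castSucc.castSucc), (lam j.castSucc.castSucc - lam jj))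
        = (lam j.castSucc.castSucc - lam ((Fin.last k).castSucc))
          * ∏ j' ∈ univ.erase j.castSucc,
              (lam j.castSucc.castSucc - lam (((Fin.last k).castSucc).succAbove j')) := by
    intro j
    have h := prod_erase_succAbove ((Fin.last k).castSucc)
      (fun jj => lam j.castSucc.castSucc - lam jj) j.castSucc
    rw [hsa2 j] at h
    exact h
  have e3 : (∏ jj ∈ univ.erase ((Fin.last k).castSucc), (lam ((Fin.last k).castSucc) - lam jj))
        = (lam ((Fin.last k).castSucc) - lam (Fin.last (k+1)))
          * ∏ j' ∈ univ.erase (Fin.last k), (lam ((Fin.last k).castSucc) - lam j'.castSucc) := by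
    have h := prod_erase_succAbove (Fin.last (k+1))
      (fun jj => lam ((Fin.last k).castSucc) - lam jj) (Fin.last k)
    simpa [Fin.succAbove_last] using h
  have e4 : (∏ jj ∈ univ.erase (Fin.last (k+1)), (lam (Fin.last (k+1)) - lam jj))
        = (lam (Fin.last (k+1)) - lam ((Fin.last k).castSucc))
          * ∏ j' ∈ univ.erase (Fin.last k),
              (lam (Fin.last (k+1)) - lam (((Fin.last k).castSucc).succAbove j')) := by
    have h := prod_erase_succAbove ((Fin.last k).castSucc)
      (fun jj => lam (Fin.last (k+1)) - lam jj) (Fin.last k)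
    rw [hsa3] at h
    exact h
  have expand2 : ∀ g : Fin (k+2) → ℝ,
      ∑ i, g i = (∑ j : Fin k, g j.castSucc.castSucc + g ((Fin.last k).castSucc))
        + g (Fin.last (k+1)) := by
    intro g; rw [Fin.sum_univ_castSucc, Fin.sum_univ_castSucc]
  have expand1 : ∀ g : Fin (k+1) → ℝ,
      ∑ i, g i = ∑ j : Fin k, g j.castSucc + g (Fin.last k) :=
    fun g => Fin.sum_univ_castSucc g
  rw [D, D, D, expand2, expand1, expand1]
  simp only [hsa2, hsa3]
  have h1 : ∀ j : Fin k,
      Real.exp (-(lam j.castSucc.castSucc) * s)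
        / ((-s)^(k+1) * ∏ jj ∈ univ.erase (j.castSucc.castSucc), (lam j.castSucc.castSucc - lam jj))
      = (Real.exp (-(lam j.castSucc.castSucc) * s)
            / ((-s)^k * ∏ j' ∈ univ.erase j.castSucc, (lam j.castSucc.castSucc - lam j'.castSucc))
          - Real.exp (-(lam j.castSucc.castSucc) * s)
            / ((-s)^k * ∏ j' ∈ univ.erase j.castSucc,
                (lam j.castSucc.castSucc - lam (((Fin.last k).castSucc).succAbove j'))))
        / (-s * (lam ((Fin.last k).castSucc) - lam (Fin.last (k+1)))) := by
    intro j
    have hu := hne _ _ ((Fin.castSucc_lt_last j.castSucc).ne)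
    have hv : lam j.castSucc.castSucc - lam ((Fin.last k).castSucc) ≠ 0 :=
      hne _ _ (by simp [Fin.castSucc_inj, (Fin.castSucc_lt_last j).ne])
    have hPA : (∏ j' ∈ univ.erase j.castSucc, (lam j.castSucc.castSucc - lam j'.castSucc)) ≠ 0 := by
      have := P_ne_zero _ hAinj j.castSucc; simpa using this
    have hPB : (∏ j' ∈ univ.erase j.castSucc,
        (lam j.castSucc.castSucc - lam (((Fin.last k).castSucc).succAbove j'))) ≠ 0 := by
      have := P_ne_zero _ hBinj j.castSucc
      rw [hsa2 j] at this; simpa using this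
    have hrel := (e1 j).symm.trans (e2 j)
    have huv : (lam j.castSucc.castSucc - lam (Fin.last (k+1)))
        - (lam j.castSucc.castSucc - lam ((Fin.last k).castSucc)) ≠ 0 := by
      have := hne _ _ hpq; intro h; apply this; linarith [sub_eq_zero.mp h]
    rw [e1 j]
    rw [show lam ((Fin.last k).castSucc) - lam (Fin.last (k+1))
      = (lam j.castSucc.castSucc - lam (Fin.last (k+1)))
        - (lam j.castSucc.castSucc - lam ((Fin.last k).castSucc)) by ring]
    exact key1 _ _ _ _ _ _ k ht hu hv hPA hPB huv hrel
  have h2 : Real.exp (-(lam ((Fin.last k).castSucc)) * s)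
        / ((-s)^(k+1) * ∏ jj ∈ univ.erase ((Fin.last k).castSucc), (lam ((Fin.last k).castSucc) - lam jj))
      = (Real.exp (-(lam ((Fin.last k).castSucc)) * s)
            / ((-s)^k * ∏ j' ∈ univ.erase (Fin.last k), (lam ((Fin.last k).castSucc) - lam j'.castSucc)))
        / (-s * (lam ((Fin.last k).castSucc) - lam (Fin.last (k+1)))) := by
    rw [e3]; exact key2 _ _ _ _ k
  have h3 : Real.exp (-(lam (Fin.last (k+1))) * s)
        / ((-s)^(k+1) * ∏ jj ∈ univ.erase (Fin.last (k+1)), (lam (Fin.last (k+1)) - lam jj))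
      = (0 - Real.exp (-(lam (Fin.last (k+1))) * s)
            / ((-s)^k * ∏ j' ∈ univ.erase (Fin.last k),
                (lam (Fin.last (k+1)) - lam (((Fin.last k).castSucc).succAbove j'))))
        / (-s * (lam ((Fin.last k).castSucc) - lam (Fin.last (k+1)))) := by
    have hw : lam (Fin.last (k+1)) - lam ((Fin.last k).castSucc) ≠ 0 := hne _ _ (Ne.symm hpq)
    have hPB : (∏ j' ∈ univ.erase (Fin.last k),
        (lam (Fin.last (k+1)) - lam (((Fin.last k).castSucc).succAbove j'))) ≠ 0 := by
      have := P_ne_zero _ hBinj (Fin.last k)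
      rw [hsa3] at this; simpa using this
    rw [e4]
    rw [show -s * (lam ((Fin.last k).castSucc) - lam (Fin.last (k+1)))
      = -s * (-(lam (Fin.last (k+1)) - lam ((Fin.last k).castSucc))) by ring]
    exact key3 _ _ _ _ k ht hw hPB
  rw [h2, h3]
  rw [Finset.sum_congr rfl (fun j _ => h1 j)]
  rw [← Finset.sum_div, Finset.sum_sub_distrib, ← add_div, ← add_div]
  congr 1
  ring

lemma exp_int (b c u : ℝ) (hb : b ≠ 0) :
    ∫ t in (0:ℝ)..u, Real.exp (c + b*t) = (Real.exp (c + b*u) - Real.exp c)/b := by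
  have hd : ∀ t : ℝ, HasDerivAt (fun t => Real.exp (c + b*t)/b) (Real.exp (c + b*t)) t := by
    intro t
    have h1 : HasDerivAt (fun t : ℝ => c + b*t) b t := by
      simpa using ((hasDerivAt_id t).const_mul b).const_add c
    have h3 := h1.exp.div_const b
    simpa [mul_div_assoc, mul_div_cancel_right₀ _ hb] using h3
  rw [intervalIntegral.integral_eq_sub_of_hasDerivAt (fun t _ => hd t)
      ((Real.continuous_exp.comp (by continuity)).intervalIntegrable 0 u)]
  rw [mul_zero, add_zero]
  ring

lemma snoc_mem (k : ℕ) (y : Fin k → ℝ) (t : ℝ) :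
    (Fin.snoc y t ∈ Tset (k+1)) ↔ ((∀ i, 0 ≤ y i) ∧ 0 ≤ t ∧ (∑ i, y i) + t ≤ 1) := by
  simp only [Tset, Set.mem_setOf_eq, Fin.sum_univ_castSucc, Fin.snoc_castSucc, Fin.snoc_last]
  constructor
  · rintro ⟨h1, h2⟩
    exact ⟨fun i => by simpa using h1 i.castSucc, by simpa using h1 (Fin.last k), h2⟩
  · rintro ⟨h1, h2, h3⟩
    refine ⟨fun i => ?_, h3⟩
    refine Fin.lastCases ?_ ?_ i
    · simpa using h2
    · intro j; simpa using h1 j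

lemma sum_shift {k : ℕ} (a y : Fin k → ℝ) (mu nu s : ℝ) :
    -s * (nu + ∑ j, (a j - nu) * y j) + (-s * (mu - nu)) * (1 - ∑ j, y j)
      = -s * (mu + ∑ j, (a j - mu) * y j) := by
  have h : ∀ w : ℝ, ∑ j, (a j - w) * y j = ∑ j, a j * y j - w * ∑ j, y j := by
    intro w
    rw [Finset.mul_sum, ← Finset.sum_sub_distrib]
    exact Finset.sum_congr rfl fun j _ => by ring
  rw [h, h]; ring

lemma I_rec (k : ℕ) (s : ℝ) (hs : s ≠ 0) (lam : Fin (k+2) → ℝ) (hlam : Function.Injective lam) :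
    Iint s lam = (Iint s (fun j : Fin (k+1) => lam j.castSucc)
        - Iint s (fun j : Fin (k+1) => lam (((Fin.last k).castSucc).succAbove j)))
        / (-s * (lam ((Fin.last k).castSucc) - lam (Fin.last (k+1)))) := by
  classical
  have hsa2 : ∀ j : Fin k, ((Fin.last k).castSucc).succAbove j.castSucc = j.castSucc.castSucc :=
    fun j => Fin.succAbove_of_castSucc_lt _ _ (Fin.castSucc_lt_castSucc_iff.mpr (Fin.castSucc_lt_last j))
  have hsa3 : ((Fin.last k).castSucc).succAbove (Fin.last k) = Fin.last (k+1) := by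
    rw [Fin.succAbove_of_le_castSucc _ _ le_rfl, Fin.succ_last]
  have hpq : ((Fin.last k).castSucc : Fin (k+2)) ≠ Fin.last (k+1) := (Fin.castSucc_lt_last _).ne
  have hb : (-s * (lam ((Fin.last k).castSucc) - lam (Fin.last (k+1)))) ≠ 0 :=
    mul_ne_zero (neg_ne_zero.mpr hs) (sub_ne_zero.mpr fun h => hpq (hlam h))
  set b : ℝ := -s * (lam ((Fin.last k).castSucc) - lam (Fin.last (k+1))) with hbdef
  set g : (Fin (k+1) → ℝ) → ℝ := (Tset (k+1)).indicator (E s lam) with hgdef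
  have hmeasT : MeasurableSet (Tset (k+1)) := (isClosed_T _).measurableSet
  have hInt : Integrable g := (integrableOn_E s lam).integrable_indicator hmeasT
  set e := MeasurableEquiv.piFinSuccAbove (fun _ : Fin (k+1) => ℝ) (Fin.last k) with hedef
  have hmp : MeasurePreserving e volume volume :=
    volume_preserving_piFinSuccAbove (fun _ : Fin (k+1) => ℝ) (Fin.last k)
  have hmps : MeasurePreserving e.symm volume volume := hmp.symm e
  have hesymm : ∀ (t : ℝ) (y : Fin k → ℝ), e.symm (t, y) = Fin.snoc y t := by
    intro t y
    show (Fin.insertNthEquiv (fun _ : Fin (k+1) => ℝ) (Fin.last k)) (t, y) = Fin.snoc y t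
    simp [Fin.insertNthEquiv, Fin.insertNth_last']
  have hInt2 : Integrable (fun z : ℝ × (Fin k → ℝ) => g (e.symm z))
      ((volume : Measure ℝ).prod (volume : Measure (Fin k → ℝ))) := by
    rw [← Measure.volume_eq_prod _ _]
    exact (hmps.integrable_comp_emb e.symm.measurableEmbedding).mpr hInt
  have step2 : Iint s lam = ∫ z : ℝ × (Fin k → ℝ), g (e.symm z) := by
    rw [Iint, ← integral_indicator hmeasT, ← hgdef,
      ← hmps.integral_comp e.symm.measurableEmbedding g]
  rw [step2, show (volume : Measure (ℝ × (Fin k → ℝ))) = (volume : Measure ℝ).prod volume from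
    Measure.volume_eq_prod _ _, integral_prod_symm _ hInt2]
  have inner : ∀ y : Fin k → ℝ, (∫ t : ℝ, g (e.symm (t, y)))
      = (Tset k).indicator (fun y => (E s (fun j : Fin (k+1) => lam j.castSucc) y
          - E s (fun j : Fin (k+1) => lam (((Fin.last k).castSucc).succAbove j)) y) / b) y := by
    intro y
    by_cases hy : y ∈ Tset k
    · have h01 : (0:ℝ) ≤ 1 - ∑ i, y i := by
        have := hy.2; linarith
      have hrw : ∀ t : ℝ, g (e.symm (t, y)) = (Set.Icc (0:ℝ) (1 - ∑ i, y i)).indicator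
          (fun t => Real.exp ((-s * (lam (Fin.last (k+1))
            + ∑ j : Fin k, (lam j.castSucc.castSucc - lam (Fin.last (k+1))) * y j)) + b * t)) t := by
        intro t
        rw [hesymm, hgdef, Set.indicator_apply, Set.indicator_apply]
        have hmem : (Fin.snoc y t ∈ Tset (k+1)) ↔ t ∈ Set.Icc (0:ℝ) (1 - ∑ i, y i) := by
          rw [snoc_mem]
          constructor
          · rintro ⟨_, h2, h3⟩; exact ⟨h2, by linarith⟩
          · rintro ⟨h2, h3⟩; exact ⟨hy.1, h2, by linarith⟩
        simp only [hmem]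
        split_ifs with h
        · rw [E]
          congr 1
          rw [Fin.sum_univ_castSucc]
          simp only [Fin.snoc_castSucc, Fin.snoc_last]
          rw [hbdef]
          ring
        · rfl
      simp only [hrw]
      rw [integral_indicator measurableSet_Icc, MeasureTheory.integral_Icc_eq_integral_Ioc,
        ← intervalIntegral.integral_of_le h01]
      rw [exp_int _ _ _ hb, Set.indicator_of_mem hy]
      have hA : Real.exp ((-s * (lam (Fin.last (k+1))
            + ∑ j : Fin k, (lam j.castSucc.castSucc - lam (Fin.last (k+1))) * y j))
            + b * (1 - ∑ i, y i))
          = E s (fun j : Fin (k+1) => lam j.castSucc) y := by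
        simp only [E]
        rw [hbdef]
        congr 1
        exact sum_shift (fun j : Fin k => lam j.castSucc.castSucc) y
          (lam ((Fin.last k).castSucc)) (lam (Fin.last (k+1))) s
      have hB : Real.exp (-s * (lam (Fin.last (k+1))
            + ∑ j : Fin k, (lam j.castSucc.castSucc - lam (Fin.last (k+1))) * y j))
          = E s (fun j : Fin (k+1) => lam (((Fin.last k).castSucc).succAbove j)) y := by
        simp only [E, hsa2, hsa3]
      rw [hA, hB]
    · have hz : ∀ t : ℝ, g (e.symm (t, y)) = 0 := by
        intro t
        rw [hesymm, hgdef]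
        apply Set.indicator_of_notMem
        intro hmem
        rw [snoc_mem] at hmem
        have hyT : y ∈ Tset k := ⟨hmem.1, by linarith [hmem.2.1, hmem.2.2]⟩
        exact hy hyT
      simp only [hz, integral_zero, Set.indicator_of_notMem hy]
  simp only [inner]
  rw [integral_indicator (isClosed_T k).measurableSet]
  rw [MeasureTheory.integral_div]
  rw [integral_sub (integrableOn_E s _) (integrableOn_E s _)]
  rfl

lemma base (s : ℝ) (lam : Fin 1 → ℝ) : Iint s lam = D s lam := by
  have hT : Tset 0 = Set.univ := by
    ext x; simp [Tset]
  rw [Iint, hT, Measure.restrict_univ, D]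
  simp only [E, Fin.sum_univ_zero, add_zero, integral_const]
  rw [show (volume : Measure (Fin 0 → ℝ)).real Set.univ = 1 by
    simp [Measure.real, volume_pi]]
  rw [Fin.sum_univ_one]
  rw [Finset.eq_empty_of_forall_notMem
    (fun j hj => (Finset.mem_erase.mp hj).1 (Fin.fin_one_eq_zero _ ▸ (Fin.fin_one_eq_zero j)))]
  simp [mul_comm]

lemma main (s : ℝ) (hs : s ≠ 0) :
    ∀ (m : ℕ) (lam : Fin (m+1) → ℝ), Function.Injective lam → Iint s lam = D s lam := by
  intro m
  induction m with
  | zero => intro lam _; exact base s lam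
  | succ k ih =>
    intro lam hlam
    rw [I_rec k s hs lam hlam, D_rec k s hs lam hlam,
      ih _ (fun a b h => Fin.castSucc_injective _ (hlam h)),
      ih _ (fun a b h => Fin.succAbove_right_injective (hlam h))]

end Stmt5

/-- For `d = n + 1 ≥ 2`, pairwise distinct reals `λ₁, …, λ_d` and `s ≠ 0`,
the Laplace transform of the uniform distribution of `Σᵢ λᵢ rᵢ` over the probability simplex,
written as an integral over the corner simplex `T_{d−1} ⊆ ℝ^{d−1}`, equals
`Σᵢ exp(−λᵢ s) / ((−s)^{d−1} ∏_{j≠i} (λᵢ − λⱼ))`. -/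
theorem stmt_5 (n : ℕ) (hn : 1 ≤ n) (lam : Fin (n + 1) → ℝ)
    (hlam : Function.Injective lam) (s : ℝ) (hs : s ≠ 0) :
    (∫ x in {x : Fin n → ℝ | (∀ i, 0 ≤ x i) ∧ (∑ i, x i) ≤ 1},
        Real.exp (-s * (lam (Fin.last n)
          + ∑ i : Fin n, (lam i.castSucc - lam (Fin.last n)) * x i)))
      = ∑ i : Fin (n + 1), Real.exp (-(lam i) * s)
          / ((-s) ^ n * ∏ j ∈ Finset.univ.erase i, (lam i - lam j)) := by
  exact Stmt5.main s hs n lam hlam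
end

section
/- Let A = a₀·I + a·σ and B = b₀·I + b·σ be qubit observables whose Bloch vectors a, b ∈ ℝ³ are linearly independent, and let T_{a,b} be the 2×2 Gram matrix of (a,b). Then for every unit vector ψ ∈ ℂ², (⟨A⟩_ψ − a₀, ⟨B⟩_ψ − b₀) T_{a,b}^{-1} (⟨A⟩_ψ − a₀, ⟨B⟩_ψ − b₀)ᵀ ≤ 1; that is, the pair of expectation values always lies in the closed ellipse {(r,s) : ω_{A,B}(r,s) ≤ 1}. -/
open Matrix MeasureTheory
open scoped ComplexOrder

/-- The Pauli matrix `σ₁`. -/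
noncomputable def sigma1 : Matrix (Fin 2) (Fin 2) ℂ := !![0, 1; 1, 0]

/-- The Pauli matrix `σ₂`. -/
noncomputable def sigma2 : Matrix (Fin 2) (Fin 2) ℂ := !![0, -Complex.I; Complex.I, 0]

/-- The Pauli matrix `σ₃`. -/
noncomputable def sigma3 : Matrix (Fin 2) (Fin 2) ℂ := !![1, 0; 0, -1]

/-- The qubit observable `A = a₀·I + a·σ` with Bloch vector `a ∈ ℝ³`. -/
noncomputable def qubitObs (a₀ : ℝ) (a : EuclideanSpace ℝ (Fin 3)) :
    Matrix (Fin 2) (Fin 2) ℂ :=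
  a₀ • (1 : Matrix (Fin 2) (Fin 2) ℂ) + a 0 • sigma1 + a 1 • sigma2 + a 2 • sigma3

/-- Expectation value `⟨A⟩_ψ = ⟨ψ, Aψ⟩` of the observable `A` in the pure state `ψ`. -/
noncomputable def expVal (A : Matrix (Fin 2) (Fin 2) ℂ) (ψ : EuclideanSpace ℂ (Fin 2)) : ℝ :=
  ((star (fun i => ψ i) : Fin 2 → ℂ) ⬝ᵥ A.mulVec (fun i => ψ i)).re

/-- Standard deviation `Δ_ψ A = √(⟨ψ,A²ψ⟩ − ⟨ψ,Aψ⟩²)` in the pure state `ψ`. -/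
noncomputable def devPure (A : Matrix (Fin 2) (Fin 2) ℂ) (ψ : EuclideanSpace ℂ (Fin 2)) : ℝ :=
  Real.sqrt (expVal (A * A) ψ - (expVal A ψ) ^ 2)

/-- The 2×2 Gram matrix `T_{a,b}` of the Bloch vectors `a, b ∈ ℝ³`. -/
noncomputable def gram2 (a b : EuclideanSpace ℝ (Fin 3)) : Matrix (Fin 2) (Fin 2) ℝ :=
  !![inner ℝ a a, inner ℝ a b; inner ℝ b a, inner ℝ b b]


private lemma key_alg2 (a0 a1 a2 b0 b1 b2 x y z : ℝ) (hn : x^2 + y^2 + z^2 = 1) :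
    (b0*b0+b1*b1+b2*b2)*(a0*x+a1*y+a2*z)^2
      - 2*(a0*b0+a1*b1+a2*b2)*((a0*x+a1*y+a2*z)*(b0*x+b1*y+b2*z))
      + (a0*a0+a1*a1+a2*a2)*(b0*x+b1*y+b2*z)^2
    ≤ (a0*a0+a1*a1+a2*a2)*(b0*b0+b1*b1+b2*b2) - (a0*b0+a1*b1+a2*b2)*(a0*b0+a1*b1+a2*b2) := by
  nlinarith [sq_nonneg (a0*(b1*z-b2*y) - a1*(b0*z-b2*x) + a2*(b0*y-b1*x)), hn,
    sq_nonneg (a0*b1-a1*b0), sq_nonneg (a0*b2-a2*b0), sq_nonneg (a1*b2-a2*b1)]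

private lemma strictCS (a b : EuclideanSpace ℝ (Fin 3)) (hab : LinearIndependent ℝ ![a, b]) :
    (inner ℝ a b : ℝ) * inner ℝ b a < (inner ℝ a a : ℝ) * inner ℝ b b := by
  obtain ⟨hb, hr⟩ : b ≠ 0 ∧ ∀ r : ℝ, r • b ≠ a := by
    have h := linearIndependent_fin2.mp hab
    simpa using h
  have hbn : ‖b‖ ≠ 0 := norm_ne_zero_iff.mpr hb
  have h1 : (inner ℝ a b : ℝ) < ‖a‖ * ‖b‖ := by
    rw [inner_lt_norm_mul_iff_real]
    intro h
    apply hr (‖b‖⁻¹ * ‖a‖)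
    rw [mul_smul, ← h, inv_smul_smul₀ hbn]
  have h2 : (inner ℝ a (-b) : ℝ) < ‖a‖ * ‖-b‖ := by
    rw [inner_lt_norm_mul_iff_real]
    intro h
    apply hr (-(‖b‖⁻¹ * ‖a‖))
    rw [norm_neg] at h
    have e : (-(‖b‖⁻¹ * ‖a‖)) • b = ‖b‖⁻¹ • (‖a‖ • -b) := by module
    rw [e, ← h, inv_smul_smul₀ hbn]
  rw [inner_neg_right, norm_neg] at h2
  have e1 : (inner ℝ a b : ℝ) * inner ℝ b a = (inner ℝ a b : ℝ)^2 := by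
    rw [real_inner_comm b a]; ring
  have e2 : (inner ℝ a a : ℝ) * inner ℝ b b = (‖a‖ * ‖b‖)^2 := by
    rw [real_inner_self_eq_norm_sq, real_inner_self_eq_norm_sq]; ring
  rw [e1, e2]
  exact sq_lt_sq' (by linarith) h1

private lemma ellipse (aa ab bb va vb : ℝ) (hd : 0 < aa*bb - ab*ab)
    (hkey : bb*va^2 - 2*ab*(va*vb) + aa*vb^2 ≤ aa*bb - ab*ab) :
    ![va, vb] ⬝ᵥ ((aa*bb - ab*ab)⁻¹ • !![bb, -ab; -ab, aa]).mulVec ![va, vb] ≤ 1 := by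
  have e : ![va, vb] ⬝ᵥ ((aa*bb - ab*ab)⁻¹ • !![bb, -ab; -ab, aa]).mulVec ![va, vb]
      = (bb*va^2 - 2*ab*(va*vb) + aa*vb^2) / (aa*bb - ab*ab) := by
    simp [Matrix.mulVec, dotProduct, Fin.sum_univ_two]
    field_simp
    ring
  rw [e, div_le_one hd]
  exact hkey

/-- For qubit observables `A = a₀·I + a·σ`, `B = b₀·I + b·σ` with linearly
independent Bloch vectors `a, b`, every unit vector `ψ ∈ ℂ²` satisfies
`(⟨A⟩_ψ − a₀, ⟨B⟩_ψ − b₀) T_{a,b}⁻¹ (⟨A⟩_ψ − a₀, ⟨B⟩_ψ − b₀)ᵀ ≤ 1`, i.e. the pair of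
expectation values lies in the closed ellipse `{ω_{A,B} ≤ 1}`. -/
theorem stmt_9 (a₀ b₀ : ℝ) (a b : EuclideanSpace ℝ (Fin 3))
    (hab : LinearIndependent ℝ ![a, b]) :
    ∀ ψ : EuclideanSpace ℂ (Fin 2), ‖ψ‖ = 1 →
      ![expVal (qubitObs a₀ a) ψ - a₀, expVal (qubitObs b₀ b) ψ - b₀] ⬝ᵥ
          (gram2 a b)⁻¹.mulVec
            ![expVal (qubitObs a₀ a) ψ - a₀, expVal (qubitObs b₀ b) ψ - b₀] ≤ 1 := by
  intro ψ hψ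
  have hn : (ψ 0).re^2 + (ψ 0).im^2 + (ψ 1).re^2 + (ψ 1).im^2 = 1 := by
    have h0 : (0:ℝ) ≤ ∑ i : Fin 2, ‖ψ i‖ ^ 2 :=
      Finset.sum_nonneg fun i _ => sq_nonneg _
    have he := EuclideanSpace.norm_eq ψ
    rw [hψ] at he
    have h : ∑ i : Fin 2, ‖ψ i‖ ^ 2 = 1 := by
      nlinarith [Real.sq_sqrt h0]
    have h2 : (ψ 0).re * (ψ 0).re + (ψ 0).im * (ψ 0).im
        + ((ψ 1).re * (ψ 1).re + (ψ 1).im * (ψ 1).im) = 1 := by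
      simpa [Fin.sum_univ_two, Complex.sq_norm,
        Complex.normSq_apply] using h
    linear_combination h2
  have hiaa : (inner ℝ a a : ℝ) = a 0 * a 0 + a 1 * a 1 + a 2 * a 2 := by
    rw [PiLp.inner_apply]; simp only [Fin.sum_univ_three, RCLike.inner_apply, conj_trivial]
  have hiab : (inner ℝ a b : ℝ) = a 0 * b 0 + a 1 * b 1 + a 2 * b 2 := by
    simp [PiLp.inner_apply, RCLike.inner_apply, Fin.sum_univ_three]
    ring
  have hibb : (inner ℝ b b : ℝ) = b 0 * b 0 + b 1 * b 1 + b 2 * b 2 := by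
    rw [PiLp.inner_apply]; simp only [Fin.sum_univ_three, RCLike.inner_apply, conj_trivial]
  have hba : (inner ℝ b a : ℝ) = inner ℝ a b := real_inner_comm a b
  have hd : 0 < (inner ℝ a a : ℝ) * inner ℝ b b - (inner ℝ a b : ℝ) * (inner ℝ a b : ℝ) := by
    have h := strictCS a b hab
    rw [hba] at h
    linarith
  have hA' : expVal (qubitObs a₀ a) ψ - a₀ =
      a 0 * (2*((ψ 0).re*(ψ 1).re + (ψ 0).im*(ψ 1).im))
      + a 1 * (2*((ψ 0).re*(ψ 1).im - (ψ 0).im*(ψ 1).re))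
      + a 2 * ((ψ 0).re^2 + (ψ 0).im^2 - (ψ 1).re^2 - (ψ 1).im^2) := by
    simp [expVal, qubitObs, sigma1, sigma2, sigma3, dotProduct, mulVec, Fin.sum_univ_two,
      Matrix.one_apply, Complex.add_re, Complex.mul_re, Complex.mul_im]
    linear_combination a₀ * hn
  have hB' : expVal (qubitObs b₀ b) ψ - b₀ =
      b 0 * (2*((ψ 0).re*(ψ 1).re + (ψ 0).im*(ψ 1).im))
      + b 1 * (2*((ψ 0).re*(ψ 1).im - (ψ 0).im*(ψ 1).re))
      + b 2 * ((ψ 0).re^2 + (ψ 0).im^2 - (ψ 1).re^2 - (ψ 1).im^2) := by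
    simp [expVal, qubitObs, sigma1, sigma2, sigma3, dotProduct, mulVec, Fin.sum_univ_two,
      Matrix.one_apply, Complex.add_re, Complex.mul_re, Complex.mul_im]
    linear_combination b₀ * hn
  have hg : (gram2 a b)⁻¹ = ((inner ℝ a a : ℝ) * inner ℝ b b - (inner ℝ a b : ℝ) * (inner ℝ a b : ℝ))⁻¹
      • !![(inner ℝ b b : ℝ), -(inner ℝ a b : ℝ); -(inner ℝ a b : ℝ), (inner ℝ a a : ℝ)] := by
    rw [show gram2 a b = !![(inner ℝ a a : ℝ), inner ℝ a b; inner ℝ b a, inner ℝ b b] from rfl,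
      Matrix.inv_def, Matrix.adjugate_fin_two_of, Matrix.det_fin_two_of, Ring.inverse_eq_inv,
      hba]
  rw [hg]
  apply ellipse _ _ _ _ _ hd
  rw [hiaa, hiab, hibb, hA', hB']
  have hn' : (2*((ψ 0).re*(ψ 1).re + (ψ 0).im*(ψ 1).im))^2
      + (2*((ψ 0).re*(ψ 1).im - (ψ 0).im*(ψ 1).re))^2
      + ((ψ 0).re^2 + (ψ 0).im^2 - (ψ 1).re^2 - (ψ 1).im^2)^2 = 1 := by
    nlinarith [hn]
  linarith [key_alg2 (a 0) (a 1) (a 2) (b 0) (b 1) (b 2)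
    (2*((ψ 0).re*(ψ 1).re + (ψ 0).im*(ψ 1).im))
    (2*((ψ 0).re*(ψ 1).im - (ψ 0).im*(ψ 1).re))
    ((ψ 0).re^2 + (ψ 0).im^2 - (ψ 1).re^2 - (ψ 1).im^2) hn']
end

section
/- Let A and B be 2×2 Hermitian complex matrices (qubit observables). Then the pure-state uncertainty region equals the mixed-state uncertainty region: {(Δ_ψA, Δ_ψB) : ψ ∈ ℂ² a unit vector} = {(Δ_ρA, Δ_ρB) : ρ a density matrix on ℂ²}. -/
open Matrix
open scoped ComplexOrder

/-- Standard deviation `Δ_ρ A = √(Tr(A²ρ) − (Tr(Aρ))²)` in the mixed state `ρ`. -/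
noncomputable def devMix (A ρ : Matrix (Fin 2) (Fin 2) ℂ) : ℝ :=
  Real.sqrt (((A * A * ρ).trace).re - (((A * ρ).trace).re) ^ 2)

/-! ### Auxiliary lemmas -/

lemma trace_mul_expand (M N : Matrix (Fin 2) (Fin 2) ℂ) :
    (M * N).trace = M 0 0 * N 0 0 + M 0 1 * N 1 0 + M 1 0 * N 0 1 + M 1 1 * N 1 1 := by
  simp [Matrix.trace_fin_two, Matrix.mul_apply, Fin.sum_univ_two]; ring

lemma cayley (M C : Matrix (Fin 2) (Fin 2) ℂ) :
    (M * M * C).trace = M.trace * (M * C).trace - M.det * C.trace := by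
  simp [Matrix.trace_fin_two, Matrix.mul_apply, Fin.sum_univ_two, Matrix.det_fin_two]; ring

lemma dot_eq_trace (ρ : Matrix (Fin 2) (Fin 2) ℂ) (ψ : EuclideanSpace ℂ (Fin 2))
    (key : ∀ i j, (starRingEnd ℂ) (ψ i) * ψ j = ρ j i) (M : Matrix (Fin 2) (Fin 2) ℂ) :
    (star (fun i => ψ i) : Fin 2 → ℂ) ⬝ᵥ M.mulVec (fun i => ψ i) = (M * ρ).trace := by
  rw [trace_mul_expand]
  simp only [dotProduct, Matrix.mulVec, Fin.sum_univ_two, Pi.star_apply, RCLike.star_def]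
  linear_combination M 0 0 * (key 0 0) + M 0 1 * (key 0 1) + M 1 0 * (key 1 0) + M 1 1 * (key 1 1)

lemma key_to_all (ρ : Matrix (Fin 2) (Fin 2) ℂ) (ψ : EuclideanSpace ℂ (Fin 2))
    (key : ∀ i j, (starRingEnd ℂ) (ψ i) * ψ j = ρ j i) (htr : ρ.trace = 1) :
    ‖ψ‖ = 1 ∧ ∀ M : Matrix (Fin 2) (Fin 2) ℂ,
        (star (fun i => ψ i) : Fin 2 → ℂ) ⬝ᵥ M.mulVec (fun i => ψ i) = (M * ρ).trace := by
  refine ⟨?_, dot_eq_trace ρ ψ key⟩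
  rw [EuclideanSpace.norm_eq, Real.sqrt_eq_one]
  have h : ∀ i, ‖ψ i‖ ^ 2 = (ρ i i).re := by
    intro i
    have h2 : ρ i i = ((Complex.normSq (ψ i) : ℝ) : ℂ) := by
      rw [← key i i, mul_comm, Complex.mul_conj]
    have h3 : (ρ i i).re = Complex.normSq (ψ i) := by rw [h2]; simp
    rw [h3, ← Complex.sq_norm]
  rw [Fin.sum_univ_two, h 0, h 1]
  have := congrArg Complex.re htr
  rw [Matrix.trace_fin_two] at this
  simpa using this

/-- Any Hermitian `2×2` matrix with trace one and determinant zero is a pure state. -/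
lemma exists_pure (ρ : Matrix (Fin 2) (Fin 2) ℂ) (hherm : ρ.IsHermitian)
    (htr : ρ.trace = 1) (hdet : ρ.det = 0) :
    ∃ ψ : EuclideanSpace ℂ (Fin 2), ‖ψ‖ = 1 ∧
      ∀ M : Matrix (Fin 2) (Fin 2) ℂ,
        (star (fun i => ψ i) : Fin 2 → ℂ) ⬝ᵥ M.mulVec (fun i => ψ i) = (M * ρ).trace := by
  have h10 : ρ 1 0 = (starRingEnd ℂ) (ρ 0 1) := (hherm.apply 1 0).symm
  have h00im : (ρ 0 0).im = 0 := Complex.conj_eq_iff_im.mp (hherm.apply 0 0)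
  have h11im : (ρ 1 1).im = 0 := Complex.conj_eq_iff_im.mp (hherm.apply 1 1)
  set p := (ρ 0 0).re with hp
  set q := (ρ 1 1).re with hq
  have h00 : ρ 0 0 = (p : ℂ) := by rw [hp]; exact (Complex.ext (by simp) (by simp [h00im])).symm
  have h11 : ρ 1 1 = (q : ℂ) := by rw [hq]; exact (Complex.ext (by simp) (by simp [h11im])).symm
  have hpq1 : p + q = 1 := by
    have h := congrArg Complex.re htr
    rw [Matrix.trace_fin_two, h00, h11] at h
    simpa using h
  have hdet2 : p * q = Complex.normSq (ρ 0 1) := by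
    have h := hdet
    rw [Matrix.det_fin_two, h00, h11, h10, Complex.mul_conj] at h
    have h2 : ((p * q : ℝ) : ℂ) = ((Complex.normSq (ρ 0 1) : ℝ) : ℂ) := by
      push_cast; linear_combination h
    exact_mod_cast h2
  have hpnn : 0 ≤ p := by nlinarith [Complex.normSq_nonneg (ρ 0 1)]
  rcases eq_or_lt_of_le hpnn with hp0 | hppos
  · have hq1 : q = 1 := by linarith
    have h01z : ρ 0 1 = 0 := by
      have : Complex.normSq (ρ 0 1) = 0 := by nlinarith
      exact Complex.normSq_eq_zero.mp this
    refine ⟨(WithLp.toLp 2 ![0, 1] : EuclideanSpace ℂ (Fin 2)), key_to_all _ _ ?_ htr⟩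
    intro i j
    fin_cases i <;> fin_cases j <;>
      simp [h00, ← hp0, h11, hq1, h01z, h10]
  · have hspne : (Real.sqrt p : ℂ) ≠ 0 := by
      simp only [ne_eq, Complex.ofReal_eq_zero]
      positivity
    have hsp2 : ((Real.sqrt p : ℂ)) * ((Real.sqrt p : ℂ)) = (p : ℂ) := by
      rw [← Complex.ofReal_mul, Real.mul_self_sqrt hpnn]
    have hpne : (p : ℂ) ≠ 0 := by
      simp only [ne_eq, Complex.ofReal_eq_zero]; exact ne_of_gt hppos
    have hns10 : (starRingEnd ℂ) (ρ 1 0) * ρ 1 0 = ((p * q : ℝ) : ℂ) := by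
      rw [h10, Complex.conj_conj, Complex.mul_conj, hdet2]
    refine ⟨(WithLp.toLp 2 ![(Real.sqrt p : ℂ), ρ 1 0 / (Real.sqrt p : ℂ)] : EuclideanSpace ℂ (Fin 2)), key_to_all _ _ ?_ htr⟩
    have k00 : (starRingEnd ℂ) ((Real.sqrt p : ℂ)) * (Real.sqrt p : ℂ) = ρ 0 0 := by
      rw [Complex.conj_ofReal, hsp2, h00]
    have k01 : (starRingEnd ℂ) ((Real.sqrt p : ℂ)) * (ρ 1 0 / (Real.sqrt p : ℂ)) = ρ 1 0 := by
      rw [Complex.conj_ofReal, mul_comm, div_mul_cancel₀ _ hspne]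
    have k10 : (starRingEnd ℂ) (ρ 1 0 / (Real.sqrt p : ℂ)) * (Real.sqrt p : ℂ) = ρ 0 1 := by
      rw [map_div₀, Complex.conj_ofReal, h10, Complex.conj_conj,
        div_mul_cancel₀ _ hspne]
    have k11 : (starRingEnd ℂ) (ρ 1 0 / (Real.sqrt p : ℂ)) * (ρ 1 0 / (Real.sqrt p : ℂ)) = ρ 1 1 := by
      rw [map_div₀, Complex.conj_ofReal, div_mul_div_comm, hns10, hsp2, h11]
      field_simp
      exact Complex.ofReal_mul p q
    intro i j
    fin_cases i <;> fin_cases j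
    · exact k00
    · exact k01
    · exact k10
    · exact k11

/-- Every pure state is a mixed state with the same moments. -/
lemma pure_to_mixed (ψ : EuclideanSpace ℂ (Fin 2)) (hψ : ‖ψ‖ = 1) :
    ∃ ρ : Matrix (Fin 2) (Fin 2) ℂ, ρ.PosSemidef ∧ ρ.trace = 1 ∧
      ∀ M : Matrix (Fin 2) (Fin 2) ℂ,
        (star (fun i => ψ i) : Fin 2 → ℂ) ⬝ᵥ M.mulVec (fun i => ψ i) = (M * ρ).trace := by
  set v : Matrix (Fin 2) (Fin 1) ℂ := Matrix.of (fun i _ => ψ i) with hv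
  have key : ∀ i j, (starRingEnd ℂ) (ψ i) * ψ j = (v * vᴴ) j i := by
    intro i j; simp [Matrix.mul_apply, hv]; ring
  have htr : (v * vᴴ).trace = 1 := by
    have hsum : ∑ i : Fin 2, ‖ψ i‖ ^ 2 = 1 := by
      rw [← Real.sqrt_eq_one, ← EuclideanSpace.norm_eq]; exact hψ
    have he : ∀ i : Fin 2, (v * vᴴ) i i = ((‖ψ i‖ ^ 2 : ℝ) : ℂ) := by
      intro i
      simp [Matrix.mul_apply, hv, Complex.mul_conj, Complex.normSq_eq_norm_sq]
    rw [Matrix.trace_fin_two, he 0, he 1, ← Complex.ofReal_add]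
    rw [show ‖ψ 0‖^2 + ‖ψ 1‖^2 = 1 from by simpa [Fin.sum_univ_two] using hsum]
    simp
  exact ⟨v * vᴴ, Matrix.posSemidef_self_mul_conjTranspose v, htr, dot_eq_trace _ ψ key⟩

lemma exists_xyz (a1 a2 a3 b1 b2 b3 : ℝ) :
    ∃ x y z : ℝ, 0 < x^2+y^2+z^2 ∧ a1*x+a2*y+a3*z = 0 ∧ b1*x+b2*y+b3*z = 0 := by
  classical
  set M : Matrix (Fin 2) (Fin 3) ℝ := !![a1,a2,a3; b1,b2,b3] with hM
  have hk : LinearMap.ker M.mulVecLin ≠ ⊥ := by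
    apply LinearMap.ker_ne_bot_of_finrank_lt
    simp
  obtain ⟨v, hv, hvne⟩ := Submodule.ne_bot_iff _ |>.mp hk
  have hv' : M.mulVec v = 0 := hv
  have h0 := congrFun hv' 0
  have h1 := congrFun hv' 1
  simp [Matrix.mulVec, dotProduct, Fin.sum_univ_three, hM] at h0 h1
  refine ⟨v 0, v 1, v 2, ?_, by linarith [h0], by linarith [h1]⟩
  obtain ⟨i, hi⟩ := Function.ne_iff.mp hvne
  fin_cases i
  · have hi' : v 0 ≠ 0 := by simpa using hi
    have : 0 < (v 0)^2 := by positivity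
    nlinarith [sq_nonneg (v 1), sq_nonneg (v 2)]
  · have hi' : v 1 ≠ 0 := by simpa using hi
    have : 0 < (v 1)^2 := by positivity
    nlinarith [sq_nonneg (v 0), sq_nonneg (v 2)]
  · have hi' : v 2 ≠ 0 := by simpa using hi
    have : 0 < (v 2)^2 := by positivity
    nlinarith [sq_nonneg (v 0), sq_nonneg (v 1)]

/-- The traceless Hermitian perturbation matrix. -/
noncomputable def Cm (x y z : ℝ) : Matrix (Fin 2) (Fin 2) ℂ :=
  !![(z : ℂ), (x : ℂ) - (y : ℂ)*Complex.I; (x : ℂ) + (y : ℂ)*Complex.I, -(z : ℂ)]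

lemma Cm_trace (x y z : ℝ) : (Cm x y z).trace = 0 := by
  simp [Cm, Matrix.trace_fin_two]

lemma Cm_herm (x y z : ℝ) : (Cm x y z).IsHermitian := by
  show (Cm x y z)ᴴ = Cm x y z
  ext i j
  fin_cases i <;> fin_cases j <;>
    simp [Cm, Matrix.conjTranspose_apply, Complex.ext_iff]

lemma Cm_trace_mul (x y z : ℝ) (A : Matrix (Fin 2) (Fin 2) ℂ) (hA : A.IsHermitian)
    (hl : 2*(A 0 1).re * x - 2*(A 0 1).im * y + ((A 0 0).re - (A 1 1).re)*z = 0) :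
    (A * Cm x y z).trace = 0 := by
  have h10 : A 1 0 = (starRingEnd ℂ) (A 0 1) := (hA.apply 1 0).symm
  have h00im : (A 0 0).im = 0 := Complex.conj_eq_iff_im.mp (hA.apply 0 0)
  have h11im : (A 1 1).im = 0 := Complex.conj_eq_iff_im.mp (hA.apply 1 1)
  rw [trace_mul_expand]
  apply Complex.ext <;>
    simp [Cm, h10, h00im, h11im, Complex.ext_iff] <;> linarith [hl]

lemma Cm_det_add (x y z : ℝ) (ρ : Matrix (Fin 2) (Fin 2) ℂ) (hρ : ρ.IsHermitian) (t : ℝ) :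
    (ρ + (t : ℂ) • Cm x y z).det
      = ρ.det + ((t * (((ρ 1 1).re - (ρ 0 0).re)*z - 2*((ρ 0 1).re * x - (ρ 0 1).im * y))
          - t^2 * (x^2+y^2+z^2) : ℝ) : ℂ) := by
  have h10 : ρ 1 0 = (starRingEnd ℂ) (ρ 0 1) := (hρ.apply 1 0).symm
  have h00im : (ρ 0 0).im = 0 := Complex.conj_eq_iff_im.mp (hρ.apply 0 0)
  have h11im : (ρ 1 1).im = 0 := Complex.conj_eq_iff_im.mp (hρ.apply 1 1)
  rw [Matrix.det_fin_two, Matrix.det_fin_two]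
  apply Complex.ext <;>
    simp [Cm, h10, h00im, h11im, Matrix.add_apply, Matrix.smul_apply, Complex.ext_iff,
      smul_eq_mul, ← Complex.ofReal_pow] <;> ring

/-- Core of the hard direction: every mixed state has a pure state with the same
first and second moments of `A` and `B`. -/
lemma mixed_to_pure (A B ρ : Matrix (Fin 2) (Fin 2) ℂ) (hA : A.IsHermitian) (hB : B.IsHermitian)
    (hρ : ρ.PosSemidef) (htr : ρ.trace = 1) :
    ∃ ψ : EuclideanSpace ℂ (Fin 2), ‖ψ‖ = 1 ∧
      devPure A ψ = devMix A ρ ∧ devPure B ψ = devMix B ρ := by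
  classical
  obtain ⟨x, y, z, hN, hlA, hlB⟩ := exists_xyz (2*(A 0 1).re) (-(2*(A 0 1).im))
    ((A 0 0).re - (A 1 1).re) (2*(B 0 1).re) (-(2*(B 0 1).im)) ((B 0 0).re - (B 1 1).re)
  have hermρ := hρ.1
  set d0 := ∏ i, hermρ.eigenvalues i with hd0
  have hdet : ρ.det = (d0 : ℂ) := by
    rw [hermρ.det_eq_prod_eigenvalues, hd0]
    push_cast
    rfl
  have hd0nn : 0 ≤ d0 := Finset.prod_nonneg fun i _ => hρ.eigenvalues_nonneg i
  set N := x^2+y^2+z^2 with hNdef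
  set Kr := ((ρ 1 1).re - (ρ 0 0).re)*z - 2*((ρ 0 1).re * x - (ρ 0 1).im * y) with hKr
  have hs2 : Real.sqrt (Kr^2 + 4*N*d0) ^ 2 = Kr^2 + 4*N*d0 :=
    Real.sq_sqrt (by nlinarith)
  set t0 := (Kr + Real.sqrt (Kr^2+4*N*d0)) / (2*N) with ht0
  have hroot : d0 + (t0*Kr - t0^2*N) = 0 := by
    have hNne : N ≠ 0 := ne_of_gt hN
    rw [ht0]
    field_simp
    rw [show Kr^2 + d0*4*N = Kr^2+4*N*d0 by ring]
    nlinarith [hs2]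
  set ρ' := ρ + (t0:ℂ) • Cm x y z with hρ'
  have hdet' : ρ'.det = 0 := by
    rw [hρ', Cm_det_add x y z ρ hermρ t0, hdet, ← hKr, ← hNdef, ← Complex.ofReal_add]
    rw [hroot]
    simp
  have hermρ' : ρ'.IsHermitian := by
    apply hermρ.add
    show _ᴴ = _
    rw [Matrix.conjTranspose_smul, Cm_herm x y z]
    congr 1
    exact Complex.conj_ofReal t0
  have htr' : ρ'.trace = 1 := by
    rw [hρ', Matrix.trace_add, Matrix.trace_smul, Cm_trace, htr]; simp
  have hmom : ∀ M : Matrix (Fin 2) (Fin 2) ℂ, (M * Cm x y z).trace = 0 →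
      (M * ρ').trace = (M * ρ).trace := by
    intro M hMC
    rw [hρ', Matrix.mul_add, Matrix.trace_add, Matrix.mul_smul, Matrix.trace_smul, hMC]
    simp
  have hTA : (A * ρ').trace = (A * ρ).trace :=
    hmom A (Cm_trace_mul x y z A hA (by linarith))
  have hTB : (B * ρ').trace = (B * ρ).trace :=
    hmom B (Cm_trace_mul x y z B hB (by linarith))
  have hT2A : (A * A * ρ').trace = (A * A * ρ).trace := by
    rw [cayley, cayley, hTA, htr', htr]
  have hT2B : (B * B * ρ').trace = (B * B * ρ).trace := by
    rw [cayley, cayley, hTB, htr', htr]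
  obtain ⟨ψ, hψ, hdot⟩ := exists_pure ρ' hermρ' htr' hdet'
  refine ⟨ψ, hψ, ?_, ?_⟩
  · unfold devPure devMix expVal
    rw [hdot, hdot, hT2A, hTA]
  · unfold devPure devMix expVal
    rw [hdot, hdot, hT2B, hTB]

/-- For qubit observables (2×2 Hermitian matrices) `A`, `B`, the pure-state
uncertainty region `{(Δ_ψA, Δ_ψB) : ψ a unit vector}` coincides with the mixed-state
uncertainty region `{(Δ_ρA, Δ_ρB) : ρ a density matrix}`. -/
theorem stmt_19 (A B : Matrix (Fin 2) (Fin 2) ℂ)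
    (hA : A.IsHermitian) (hB : B.IsHermitian) :
    {q : ℝ × ℝ | ∃ ψ : EuclideanSpace ℂ (Fin 2), ‖ψ‖ = 1 ∧
        q = (devPure A ψ, devPure B ψ)}
      = {q : ℝ × ℝ | ∃ ρ : Matrix (Fin 2) (Fin 2) ℂ,
          ρ.PosSemidef ∧ ρ.trace = 1 ∧ q = (devMix A ρ, devMix B ρ)} := by
  ext q
  simp only [Set.mem_setOf_eq]
  constructor
  · rintro ⟨ψ, hψ, rfl⟩
    obtain ⟨ρ, hpsd, htr, hdot⟩ := pure_to_mixed ψ hψ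
    refine ⟨ρ, hpsd, htr, ?_⟩
    unfold devPure devMix expVal
    rw [hdot, hdot, hdot, hdot]
  · rintro ⟨ρ, hpsd, htr, rfl⟩
    obtain ⟨ψ, hψ, h1, h2⟩ := mixed_to_pure A B ρ hA hB hpsd htr
    exact ⟨ψ, hψ, by rw [h1, h2]⟩
end
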